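/- arXiv:1911.11171 — 4 statements merged into one kernel-verified Lean document; each statement's English description precedes it below -/
import Mathlib

section
/- Let (M,b) be a linear constraint system over ℤ_d with d > 1. Then (M,b) admits a quantum solution on some nonzero complex Hilbert space if and only if the element J of the solution group 𝒢(M,b) has order exactly d. -/
/-- ω = exp(2πi/d). -/
noncomputable def rootOfUnity (d : ℕ) : ℂ := Complex.exp (2 * Real.pi * Complex.I / d)

/-- A quantum solution to the linear constraint system `(M, b)` over `ℤ_d` on a complex
Hilbert space `H`: bounded operators `A i` with `A i ^ d = 1`, commuting whenever two
variables appear in a common constraint, and with `∏ j, A j ^ M i j = ω ^ b i • 1` for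
every row `i`. -/
def IsQuantumSolution (d : ℕ) {m n : ℕ} (M : Matrix (Fin m) (Fin n) (ZMod d))
    (b : Fin m → ZMod d) {H : Type} [NormedAddCommGroup H] [InnerProductSpace ℂ H]
    (A : Fin n → H →L[ℂ] H) : Prop :=
  (∀ i, A i ^ d = 1) ∧
  (∀ j k : Fin n, (∃ i, M i j ≠ 0 ∧ M i k ≠ 0) → Commute (A j) (A k)) ∧
  (∀ i : Fin m, (List.ofFn fun j => A j ^ (M i j).val).prod
      = rootOfUnity d ^ (b i).val • (1 : H →L[ℂ] H))

/-- `(M,b)` admits a quantum solution on some nonzero complex Hilbert space. -/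
def HasQuantumSolution (d : ℕ) {m n : ℕ} (M : Matrix (Fin m) (Fin n) (ZMod d))
    (b : Fin m → ZMod d) : Prop :=
  ∃ (H : Type) (_ : NormedAddCommGroup H) (_ : InnerProductSpace ℂ H)
    (_ : CompleteSpace H) (_ : Nontrivial H) (A : Fin n → H →L[ℂ] H),
    IsQuantumSolution d M b A

/-- The defining relations of the solution group of the LCS `(M,b)` over `ℤ_d`, on the
generators `none = J` and `some i = gᵢ`:  `J^d = gᵢ^d = e`, `J` is central,
`g_j g_k = g_k g_j` whenever variables `j,k` share a constraint, and
`J^{-bᵢ} ∏_j g_j^{M i j} = e` for every row `i`. -/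
def lcsRels (d : ℕ) {m n : ℕ} (M : Matrix (Fin m) (Fin n) (ZMod d)) (b : Fin m → ZMod d) :
    Set (FreeGroup (Option (Fin n))) :=
  {w | (∃ x : Option (Fin n), w = FreeGroup.of x ^ d) ∨
    (∃ i : Fin n, w = FreeGroup.of (none : Option (Fin n)) * FreeGroup.of (some i) *
        (FreeGroup.of (none : Option (Fin n)))⁻¹ * (FreeGroup.of (some i))⁻¹) ∨
    (∃ j k : Fin n, (∃ i, M i j ≠ 0 ∧ M i k ≠ 0) ∧
        w = FreeGroup.of (some j) * FreeGroup.of (some k) *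
          (FreeGroup.of (some j))⁻¹ * (FreeGroup.of (some k))⁻¹) ∨
    (∃ i : Fin m, w = (FreeGroup.of (none : Option (Fin n)) ^ (b i).val)⁻¹ *
        (List.ofFn fun j => FreeGroup.of (some j) ^ (M i j).val).prod)}

/-- The solution group `𝒢(M,b)`; `PresentedGroup.of none` is `J` and
`PresentedGroup.of (some i)` is the generator `gᵢ`. -/
abbrev SolutionGroup (d : ℕ) {m n : ℕ} (M : Matrix (Fin m) (Fin n) (ZMod d))
    (b : Fin m → ZMod d) := PresentedGroup (lcsRels d M b)

namespace LCSAux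

open scoped ENNReal

noncomputable section

/-! ### The regular representation on `ℓ²(G)` -/

variable {G : Type} [Group G]

lemma memℓp_comp (e : G ≃ G) (f : lp (fun _ : G => ℂ) 2) :
    Memℓp (fun x => f (e x)) 2 := by
  have h2 : (0:ℝ) < (2 : ℝ≥0∞).toReal := by norm_num
  apply memℓp_gen
  have hs := (memℓp_gen_iff h2).mp (lp.memℓp f)
  exact (e.summable_iff (f := fun i => ‖f i‖ ^ (2:ℝ≥0∞).toReal)).mpr hs

/-- Composition with a bijection of the index set, as a linear isometry of `ℓ²`. -/
def lpCongr (e : G ≃ G) :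
    lp (fun _ : G => ℂ) 2 ≃ₗᵢ[ℂ] lp (fun _ : G => ℂ) 2 where
  toFun f := ⟨fun x => f (e x), memℓp_comp e f⟩
  invFun f := ⟨fun x => f (e.symm x), memℓp_comp e.symm f⟩
  map_add' f g := by
    apply lp.ext
    funext x
    simp [lp.coeFn_add]
    rfl
  map_smul' c f := by
    apply lp.ext
    funext x
    simp [lp.coeFn_smul]
  left_inv f := by
    apply lp.ext
    funext x
    simp
  right_inv f := by
    apply lp.ext
    funext x
    simp
  norm_map' f := by
    have h2 : (0:ℝ) < (2 : ℝ≥0∞).toReal := by norm_num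
    rw [lp.norm_eq_tsum_rpow h2, lp.norm_eq_tsum_rpow h2]
    congr 1
    exact e.tsum_eq (fun i => ‖f i‖ ^ (2:ℝ≥0∞).toReal)

lemma lpCongr_apply (e : G ≃ G) (f : lp (fun _ : G => ℂ) 2) (x : G) :
    lpCongr e f x = f (e x) := rfl

/-- Left translation by `g` on `ℓ²(G)`. -/
def transCLM (g : G) : lp (fun _ : G => ℂ) 2 →L[ℂ] lp (fun _ : G => ℂ) 2 :=
  (lpCongr ((Equiv.mulLeft g).symm)).toLinearIsometry.toContinuousLinearMap

lemma transCLM_apply (g : G) (f : lp (fun _ : G => ℂ) 2) (x : G) :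
    transCLM g f x = f (g⁻¹ * x) := rfl

/-- The left regular representation of `G` on `ℓ²(G)`. -/
def trans : G →* (lp (fun _ : G => ℂ) 2 →L[ℂ] lp (fun _ : G => ℂ) 2) where
  toFun := transCLM
  map_one' := by
    ext f x
    simp [transCLM_apply]
  map_mul' g h := by
    ext f x
    simp [transCLM_apply, ContinuousLinearMap.mul_apply, mul_assoc]

lemma trans_apply (g : G) (f : lp (fun _ : G => ℂ) 2) (x : G) :
    trans g f x = f (g⁻¹ * x) := rfl

lemma trans_single [DecidableEq G] (g a : G) (c : ℂ) :
    trans g (lp.single 2 a c) = lp.single 2 (g * a) c := by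
  apply lp.ext
  funext x
  by_cases hx : x = g * a
  · subst hx
    have h1 : g⁻¹ * (g * a) = a := inv_mul_cancel_left g a
    rw [trans_apply, h1, lp.single_apply_self, lp.single_apply_self]
  · have h1 : g⁻¹ * x ≠ a := by
      intro h
      apply hx
      rw [← h, mul_inv_cancel_left]
    rw [trans_apply, lp.single_apply_ne _ _ _ h1, lp.single_apply_ne _ _ _ hx]

end

/-! ### Basic consequences of the relations in the solution group -/

section Rels

variable (d : ℕ) {m n : ℕ} (M : Matrix (Fin m) (Fin n) (ZMod d)) (b : Fin m → ZMod d)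

lemma rel_eq_one {r : FreeGroup (Option (Fin n))} (hr : r ∈ lcsRels d M b) :
    PresentedGroup.mk (lcsRels d M b) r = 1 :=
  (QuotientGroup.eq_one_iff r).mpr (Subgroup.subset_normalClosure hr)

lemma gen_pow_d (x : Option (Fin n)) :
    (PresentedGroup.of x : SolutionGroup d M b) ^ d = 1 := by
  have h := rel_eq_one d M b (Or.inl ⟨x, rfl⟩)
  rwa [map_pow] at h

lemma J_comm (i : Fin n) :
    Commute (PresentedGroup.of none : SolutionGroup d M b) (PresentedGroup.of (some i)) := by
  have h := rel_eq_one d M b (Or.inr (Or.inl ⟨i, rfl⟩))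
  rw [map_mul, map_mul, map_mul, map_inv, map_inv] at h
  exact commutatorElement_eq_one_iff_commute.mp h

lemma pair_comm {j k : Fin n} (hjk : ∃ i, M i j ≠ 0 ∧ M i k ≠ 0) :
    Commute (PresentedGroup.of (some j) : SolutionGroup d M b) (PresentedGroup.of (some k)) := by
  have h := rel_eq_one d M b (Or.inr (Or.inr (Or.inl ⟨j, k, hjk, rfl⟩)))
  rw [map_mul, map_mul, map_mul, map_inv, map_inv] at h
  exact commutatorElement_eq_one_iff_commute.mp h

lemma row_eq (i : Fin m) :
    (List.ofFn fun j => (PresentedGroup.of (some j) : SolutionGroup d M b) ^ (M i j).val).prod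
      = (PresentedGroup.of (none : Option (Fin n)) : SolutionGroup d M b) ^ (b i).val := by
  have h := rel_eq_one d M b (Or.inr (Or.inr (Or.inr ⟨i, rfl⟩)))
  rw [map_mul, map_inv, inv_mul_eq_one, map_pow, map_list_prod, List.map_ofFn] at h
  have h2 : (List.ofFn (⇑(PresentedGroup.mk (lcsRels d M b)) ∘ fun j =>
      FreeGroup.of (some j) ^ (M i j).val))
      = (List.ofFn fun j => (PresentedGroup.of (some j) : SolutionGroup d M b) ^ (M i j).val) := by
    refine congrArg List.ofFn (funext fun j => ?_)
    simp only [Function.comp_apply]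
    rw [map_pow]
    rfl
  rw [h2] at h
  exact h.symm

end Rels

/-- Shifting the index of a sum over `range d` when the `d`-th term equals the `0`-th. -/
lemma sum_shift {M : Type*} [AddCommGroup M] (φ : ℕ → M) (d : ℕ) (h : φ d = φ 0) :
    ∑ k ∈ Finset.range d, φ (k + 1) = ∑ k ∈ Finset.range d, φ k := by
  have hs1 := Finset.sum_range_succ' φ d
  have hs2 := Finset.sum_range_succ φ d
  have h3 : (∑ k ∈ Finset.range d, φ (k + 1)) + φ 0
      = (∑ k ∈ Finset.range d, φ k) + φ 0 := by
    rw [← hs1, hs2, h]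
  exact add_right_cancel h3

/-! ### A scalar acting as the identity -/

lemma smul_one_eq_one {H : Type} [NormedAddCommGroup H] [InnerProductSpace ℂ H] [Nontrivial H]
    {c : ℂ} (h : c • (1 : H →L[ℂ] H) = 1) : c = 1 := by
  obtain ⟨v, hv⟩ := exists_ne (0 : H)
  have h1 : c • v = v := by
    have := congrArg (fun T : H →L[ℂ] H => T v) h
    simpa using this
  have h2 : (c - 1) • v = 0 := by rw [sub_smul, one_smul, h1, sub_self]
  rcases smul_eq_zero.mp h2 with h3 | h3
  · exact sub_eq_zero.mp h3
  · exact absurd h3 hv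

end LCSAux

set_option maxHeartbeats 4000000 in
set_option synthInstance.maxHeartbeats 1000000 in
open LCSAux in
/-- for `d > 1`, the LCS `(M,b)` over `ℤ_d` admits a quantum solution on
some nonzero complex Hilbert space iff the element `J` of the solution group `𝒢(M,b)`
has order exactly `d`. -/
theorem hasQuantumSolution_iff_orderOf_J_eq (d : ℕ) (hd : 1 < d) {m n : ℕ}
    (M : Matrix (Fin m) (Fin n) (ZMod d)) (b : Fin m → ZMod d) :
    HasQuantumSolution d M b ↔
      orderOf (PresentedGroup.of (none : Option (Fin n)) : SolutionGroup d M b) = d := by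
  classical
  haveI : DecidableEq (SolutionGroup d M b) := Classical.decEq _
  have hd0 : d ≠ 0 := by omega
  set ω : ℂ := rootOfUnity d with hωdef
  have hprim : IsPrimitiveRoot ω d := Complex.isPrimitiveRoot_exp d hd0
  have hωd : ω ^ d = 1 := hprim.pow_eq_one
  have hω0 : ω ≠ 0 := fun h => by simp [h, zero_pow hd0] at hωd
  constructor
  · -- forward direction
    rintro ⟨H, _, _, _, _, A, hpow, hcom, hrow⟩
    -- units
    have hAmul : ∀ i, A i * A i ^ (d - 1) = 1 := by
      intro i
      rw [← pow_succ']
      have : d - 1 + 1 = d := by omega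
      rw [this, hpow i]
    have hAmul' : ∀ i, A i ^ (d - 1) * A i = 1 := by
      intro i
      rw [← pow_succ]
      have : d - 1 + 1 = d := by omega
      rw [this, hpow i]
    let uA : Fin n → (H →L[ℂ] H)ˣ := fun i => ⟨A i, A i ^ (d - 1), hAmul i, hAmul' i⟩
    let uJ : (H →L[ℂ] H)ˣ :=
      ⟨ω • 1, ω⁻¹ • 1,
        by simp [smul_mul_assoc, smul_smul, mul_inv_cancel₀ hω0, inv_mul_cancel₀ hω0],
        by simp [smul_mul_assoc, smul_smul, mul_inv_cancel₀ hω0, inv_mul_cancel₀ hω0]⟩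
    let f : Option (Fin n) → (H →L[ℂ] H)ˣ := fun x => match x with
      | none => uJ
      | some i => uA i
    have huAval : ∀ i, ((uA i : (H →L[ℂ] H)ˣ) : H →L[ℂ] H) = A i := fun _ => rfl
    have huJval : ((uJ : (H →L[ℂ] H)ˣ) : H →L[ℂ] H) = ω • 1 := rfl
    have hrels : ∀ r ∈ lcsRels d M b, FreeGroup.lift f r = 1 := by
      rintro r (⟨x, rfl⟩ | ⟨i, rfl⟩ | ⟨j, k, hjk, rfl⟩ | ⟨i, rfl⟩)
      · rw [map_pow, FreeGroup.lift_apply_of]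
        apply Units.ext
        rw [Units.val_pow_eq_pow_val, Units.val_one]
        cases x with
        | none => rw [huJval, smul_pow, one_pow, hωd, one_smul]
        | some i => rw [huAval, hpow i]
      · simp only [map_mul, map_inv, FreeGroup.lift_apply_of]
        rw [← commutatorElement_def]
        apply commutatorElement_eq_one_iff_commute.mpr
        apply Units.ext
        rw [Units.val_mul, Units.val_mul]
        show (ω • 1 : H →L[ℂ] H) * A i = A i * (ω • 1)
        simp [smul_mul_assoc, mul_smul_comm]
      · simp only [map_mul, map_inv, FreeGroup.lift_apply_of]
        rw [← commutatorElement_def]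
        apply commutatorElement_eq_one_iff_commute.mpr
        apply Units.ext
        rw [Units.val_mul, Units.val_mul]
        exact hcom j k hjk
      · rw [map_mul, map_inv, map_pow, map_list_prod, List.map_ofFn, inv_mul_eq_one,
          FreeGroup.lift_apply_of]
        apply Units.ext
        rw [Units.val_pow_eq_pow_val, huJval, smul_pow, one_pow]
        have hlist : (List.map (FreeGroup.lift f) (List.ofFn fun j =>
            FreeGroup.of (some j) ^ (M i j).val)).prod.val
            = (List.ofFn fun j => A j ^ (M i j).val).prod := by
          rw [← Units.coeHom_apply, map_list_prod, List.map_map, List.map_ofFn]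
          refine congrArg List.prod (congrArg List.ofFn (funext fun j => ?_))
          show (Units.coeHom (H →L[ℂ] H)) ((FreeGroup.lift f)
            (FreeGroup.of (some j) ^ (M i j).val)) = A j ^ (M i j).val
          rw [map_pow, map_pow, FreeGroup.lift_apply_of]
          rfl
        rw [List.map_ofFn] at hlist
        rw [hlist, hrow i, hωdef]
    let φ := PresentedGroup.toGroup hrels
    have hφJ : φ (PresentedGroup.of (none : Option (Fin n))) = uJ := PresentedGroup.toGroup.of hrels
    set J : SolutionGroup d M b := PresentedGroup.of none with hJdef
    have h1 : orderOf J ∣ d := orderOf_dvd_of_pow_eq_one (gen_pow_d d M b none)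
    have h2 : d ∣ orderOf J := by
      have hp : J ^ orderOf J = 1 := pow_orderOf_eq_one J
      have hu : uJ ^ orderOf J = 1 := by rw [← hφJ, ← map_pow, hp, map_one]
      have hval : ω ^ orderOf J • (1 : H →L[ℂ] H) = 1 := by
        have := congrArg (Units.val) hu
        rw [Units.val_pow_eq_pow_val, huJval, Units.val_one, smul_pow, one_pow] at this
        exact this
      have : ω ^ orderOf J = 1 := smul_one_eq_one hval
      exact (hprim.pow_eq_one_iff_dvd _).mp this
    exact Nat.dvd_antisymm h1 h2
  · -- backward direction
    intro hord
    set J : SolutionGroup d M b := PresentedGroup.of none with hJdef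
    have hJd : J ^ d = 1 := gen_pow_d d M b none
    have hcentral : ∀ x : SolutionGroup d M b, J * x = x * J := by
      intro x
      have hx : x ∈ Subgroup.centralizer {J} := by
        apply PresentedGroup.generated_by
        intro j
        rw [Subgroup.mem_centralizer_iff]
        rintro y rfl
        cases j with
        | none => rfl
        | some i => exact J_comm d M b i
      exact Subgroup.mem_centralizer_iff.mp hx J rfl
    set ρ := (trans : SolutionGroup d M b →*
      (lp (fun _ : SolutionGroup d M b => ℂ) 2 →L[ℂ] lp (fun _ : SolutionGroup d M b => ℂ) 2))
      with hρdef
    set V : Submodule ℂ (lp (fun _ : SolutionGroup d M b => ℂ) 2) :=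
      LinearMap.ker ((ρ J - ω • (1 : lp (fun _ : SolutionGroup d M b => ℂ) 2 →L[ℂ]
        lp (fun _ : SolutionGroup d M b => ℂ) 2) : _ →L[ℂ] _).toLinearMap) with hVdef
    have hmemV : ∀ g : lp (fun _ : SolutionGroup d M b => ℂ) 2, g ∈ V ↔ ρ J g = ω • g := by
      intro g
      rw [hVdef, LinearMap.mem_ker, ContinuousLinearMap.coe_coe]
      rw [ContinuousLinearMap.coe_sub', Pi.sub_apply, sub_eq_zero]
      simp [ContinuousLinearMap.smul_apply]
    have hVclosed : IsClosed (V : Set (lp (fun _ : SolutionGroup d M b => ℂ) 2)) :=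
      ContinuousLinearMap.isClosed_ker _
    haveI : CompleteSpace V := hVclosed.completeSpace_coe
    have hinv : ∀ (g : SolutionGroup d M b) (u : lp (fun _ : SolutionGroup d M b => ℂ) 2),
        u ∈ V → ρ g u ∈ V := by
      intro g u hu
      rw [hmemV] at hu ⊢
      have hswap : ρ J (ρ g u) = ρ g (ρ J u) := by
        rw [← ContinuousLinearMap.mul_apply, ← map_mul, hcentral, map_mul,
          ContinuousLinearMap.mul_apply]
      rw [hswap, hu, map_smul]
    let τ : SolutionGroup d M b →* (V →L[ℂ] V) :=
      { toFun := fun g => ContinuousLinearMap.codRestrict ((ρ g).comp V.subtypeL) V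
          (fun v => hinv g v v.2)
        map_one' := by
          refine ContinuousLinearMap.ext fun v => Subtype.ext ?_
          show ρ 1 (v : _) = (v : _)
          rw [map_one]
          rfl
        map_mul' := fun g h => by
          refine ContinuousLinearMap.ext fun v => Subtype.ext ?_
          show ρ (g * h) (v : _) = _
          rw [map_mul]
          rfl }
    have hτapply : ∀ (g : SolutionGroup d M b) (v : V), ((τ g v : V) :
        lp (fun _ : SolutionGroup d M b => ℂ) 2) = ρ g (v : _) := fun g v => rfl
    have hτJ : τ J = ω • (1 : V →L[ℂ] V) := by
      refine ContinuousLinearMap.ext fun v => Subtype.ext ?_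
      show ρ J (v : _) = _
      rw [(hmemV _).mp v.2]
      rfl
    -- the nonzero vector
    set f0 : lp (fun _ : SolutionGroup d M b => ℂ) 2 :=
      ∑ k ∈ Finset.range d, ω⁻¹ ^ k • lp.single 2 (J ^ k) (1 : ℂ) with hf0def
    have hf0mem : f0 ∈ V := by
      rw [hmemV, hf0def, map_sum, Finset.smul_sum]
      have hL : ∀ k ∈ Finset.range d, ρ J (ω⁻¹ ^ k • lp.single 2 (J ^ k) (1 : ℂ))
          = (ω * ω⁻¹ ^ (k + 1)) • lp.single 2 (J ^ (k + 1)) (1 : ℂ) := by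
        intro k _
        rw [map_smul, hρdef, trans_single, ← pow_succ']
        congr 1
        rw [pow_succ', ← mul_assoc, mul_inv_cancel₀ hω0, one_mul]
      have hR : ∀ k ∈ Finset.range d, ω • ω⁻¹ ^ k •
            (lp.single 2 (J ^ k) (1 : ℂ) : lp (fun _ : SolutionGroup d M b => ℂ) 2)
          = (ω * ω⁻¹ ^ k) • lp.single 2 (J ^ k) (1 : ℂ) := by
        intro k _
        rw [smul_smul]
      rw [Finset.sum_congr rfl hL, Finset.sum_congr rfl hR]
      refine sum_shift (fun k => (ω * ω⁻¹ ^ k) •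
        (lp.single 2 (J ^ k) (1 : ℂ) : lp (fun _ : SolutionGroup d M b => ℂ) 2)) d ?_
      show (ω * ω⁻¹ ^ d) •
            (lp.single 2 (J ^ d) (1 : ℂ) : lp (fun _ : SolutionGroup d M b => ℂ) 2)
          = (ω * ω⁻¹ ^ 0) • lp.single 2 (J ^ 0) (1 : ℂ)
      rw [hJd, pow_zero, inv_pow, hωd, inv_one, pow_zero]
    have hJk_ne : ∀ k, k ∈ Finset.range d → k ≠ 0 → J ^ k ≠ 1 := by
      intro k hk hk0 h
      have h1 := orderOf_dvd_of_pow_eq_one h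
      rw [hord] at h1
      have h2 := Nat.le_of_dvd (Nat.pos_of_ne_zero hk0) h1
      have h3 := Finset.mem_range.mp hk
      omega
    have hf0ne : f0 ≠ 0 := by
      intro h0
      have hev : f0 (1 : SolutionGroup d M b) = 1 := by
        let ev : lp (fun _ : SolutionGroup d M b => ℂ) 2 →+ ℂ :=
          { toFun := fun g => g (1 : SolutionGroup d M b)
            map_zero' := by
              show ((0 : lp (fun _ : SolutionGroup d M b => ℂ) 2) : ∀ _, ℂ) 1 = 0
              rw [lp.coeFn_zero]
              rfl
            map_add' := fun g h => by
              show ((g + h : lp (fun _ : SolutionGroup d M b => ℂ) 2) : ∀ _, ℂ) 1 = _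
              rw [lp.coeFn_add]
              rfl }
        have hev_eq : ∀ x : lp (fun _ : SolutionGroup d M b => ℂ) 2,
            ev x = x (1 : SolutionGroup d M b) := fun _ => rfl
        have hsum : ev f0 = ∑ k ∈ Finset.range d,
            ev (ω⁻¹ ^ k • lp.single 2 (J ^ k) (1 : ℂ)) := by
          rw [hf0def, map_sum]
        have hterm : ∀ k ∈ Finset.range d, k ≠ 0 →
            ev (ω⁻¹ ^ k • lp.single 2 (J ^ k) (1 : ℂ)) = 0 := by
          intro k hk hk0
          rw [hev_eq, lp.coeFn_smul, Pi.smul_apply]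
          rw [lp.single_apply_ne _ _ _ (fun h => hJk_ne k hk hk0 h.symm)]
          simp
        have h00 : ev (ω⁻¹ ^ 0 • lp.single 2 (J ^ 0) (1 : ℂ)) = 1 := by
          rw [hev_eq, lp.coeFn_smul, Pi.smul_apply, pow_zero, pow_zero, lp.single_apply_self]
          simp
        show ev f0 = 1
        rw [hsum, Finset.sum_eq_single 0 hterm (fun h => absurd (Finset.mem_range.mpr
          (by omega)) h), h00]
      rw [h0] at hev
      simp at hev
    letI instN : NormedAddCommGroup V := inferInstance
    letI instIP : InnerProductSpace ℂ V := inferInstance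
    haveI : Nontrivial V :=
      ⟨⟨⟨f0, hf0mem⟩, 0, fun h => hf0ne (by simpa using congrArg Subtype.val h)⟩⟩
    refine ⟨V, inferInstance, inferInstance, inferInstance, inferInstance,
      fun i => τ (PresentedGroup.of (some i)), ?_, ?_, ?_⟩
    · intro i
      rw [← map_pow, gen_pow_d d M b (some i), map_one]
    · intro j k hjk
      exact (pair_comm d M b hjk).map τ
    · intro i
      have hlist : (List.ofFn fun j => τ (PresentedGroup.of (some j)) ^ (M i j).val)
          = List.map τ (List.ofFn fun j =>
              (PresentedGroup.of (some j) : SolutionGroup d M b) ^ (M i j).val) := by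
        rw [List.map_ofFn]
        congr 1
        funext j
        simp [Function.comp, map_pow]
      rw [hlist, ← map_list_prod, row_eq d M b i, map_pow, hτJ, smul_pow, one_pow]
end

section
/- Let d be odd and let (M,b) be a linear constraint system over ℤ_d whose solution group 𝒢(M,b) has a phase-commutation relation, i.e. there are generators g, h of 𝒢(M,b) and a, b', c ∈ ℤ_d with c ≠ 0 such that g^a h^{b'} = J^c h^{b'} g^a holds in 𝒢(M,b). Then (M,b) has no quantum solution on any nonzero complex Hilbert space. -/
private lemma rootOfUnity_pow_self {d : ℕ} (hd : d ≠ 0) : rootOfUnity d ^ d = 1 := by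
  have hd' : (d : ℂ) ≠ 0 := Nat.cast_ne_zero.mpr hd
  rw [rootOfUnity, ← Complex.exp_nat_mul, mul_comm, div_mul_cancel₀ _ hd',
    Complex.exp_two_pi_mul_I]

private lemma list_prod_pow_of_pairwise {M : Type*} [Monoid M] (k : ℕ) :
    ∀ l : List M, l.Pairwise Commute → (l.map (· ^ k)).prod = l.prod ^ k
  | [], _ => by simp
  | a :: t, h => by
    obtain ⟨h1, h2⟩ := List.pairwise_cons.mp h
    have hc : Commute a t.prod := Commute.list_prod_right _ _ h1
    simp only [List.map_cons, List.prod_cons, list_prod_pow_of_pairwise k t h2, hc.mul_pow]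

private lemma commutator_eq_one {G : Type*} [Group G] {g h : G} (hc : Commute g h) :
    g * h * g⁻¹ * h⁻¹ = 1 := by
  rw [hc.eq]; group

private lemma smul_one_comm {H : Type} [NormedAddCommGroup H] [InnerProductSpace ℂ H]
    (r : ℂ) (T : H →L[ℂ] H) : (r • (1 : H →L[ℂ] H)) * T = T * (r • 1) := by
  simp [smul_mul_assoc, mul_smul_comm]

private lemma exists_hom (d : ℕ) (hd : d ≠ 0) {m n : ℕ}
    (M : Matrix (Fin m) (Fin n) (ZMod d)) (b : Fin m → ZMod d)
    {H : Type} [NormedAddCommGroup H] [InnerProductSpace ℂ H]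
    (A : Fin n → H →L[ℂ] H) (hA : IsQuantumSolution d M b A) (k : ℕ) :
    ∃ φ : SolutionGroup d M b →* (H →L[ℂ] H)ˣ,
      (∀ i : Fin n, ((φ (PresentedGroup.of (some i)) : H →L[ℂ] H)) = A i ^ k) ∧
      ((φ (PresentedGroup.of (none : Option (Fin n))) : H →L[ℂ] H)
        = rootOfUnity d ^ k • 1) := by
  haveI : NeZero d := ⟨hd⟩
  obtain ⟨h1, h2, h3⟩ := hA
  set B : Option (Fin n) → (H →L[ℂ] H) :=
    fun o => Option.rec (rootOfUnity d • 1) A o with hB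
  have hBd : ∀ x, B x ^ d = 1 := by
    rintro (_ | i)
    · show (rootOfUnity d • (1 : H →L[ℂ] H)) ^ d = 1
      rw [smul_pow, one_pow, rootOfUnity_pow_self hd, one_smul]
    · exact h1 i
  have hkey : k + (d - 1) * k = d * k := by
    have h1d : 1 ≤ d := Nat.one_le_iff_ne_zero.mpr hd
    calc k + (d - 1) * k = (1 + (d - 1)) * k := by ring
      _ = d * k := by rw [Nat.add_sub_cancel' h1d]
  have hkey' : (d - 1) * k + k = d * k := by omega
  have hBinv1 : ∀ x, B x ^ k * B x ^ ((d - 1) * k) = 1 := by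
    intro x; rw [← pow_add, hkey, pow_mul, hBd, one_pow]
  have hBinv2 : ∀ x, B x ^ ((d - 1) * k) * B x ^ k = 1 := by
    intro x; rw [← pow_add, hkey', pow_mul, hBd, one_pow]
  set u : Option (Fin n) → (H →L[ℂ] H)ˣ :=
    fun x => ⟨B x ^ k, B x ^ ((d - 1) * k), hBinv1 x, hBinv2 x⟩ with hu
  -- commutation facts
  have hcomm0 : ∀ z : (H →L[ℂ] H)ˣ, Commute (u none) z := by
    intro z
    apply Units.ext
    show (B none ^ k) * (z : H →L[ℂ] H) = (z : H →L[ℂ] H) * (B none ^ k)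
    have : B none ^ k = rootOfUnity d ^ k • 1 := by
      show (rootOfUnity d • (1 : H →L[ℂ] H)) ^ k = _
      rw [smul_pow, one_pow]
    rw [this]; exact smul_one_comm _ _
  have hcommA : ∀ j j' : Fin n, Commute (A j) (A j') → Commute (u (some j)) (u (some j')) := by
    intro j j' h
    apply Units.ext
    show (A j ^ k) * (A j' ^ k) = (A j' ^ k) * (A j ^ k)
    exact (h.pow_pow k k).eq
  -- pairwise commuting row entries
  have hrow : ∀ i : Fin m, (List.ofFn fun j => A j ^ (M i j).val).Pairwise Commute := by
    intro i
    rw [List.pairwise_ofFn]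
    intro j j' _
    by_cases hj : M i j = 0
    · rw [hj, ZMod.val_zero, pow_zero]; exact Commute.one_left _
    · by_cases hj' : M i j' = 0
      · rw [hj', ZMod.val_zero, pow_zero]; exact Commute.one_right _
      · exact (h2 j j' ⟨i, hj, hj'⟩).pow_pow _ _
  have hrowk : ∀ i : Fin m, (List.ofFn fun j => (A j ^ (M i j).val) ^ k).prod
      = (rootOfUnity d ^ (b i).val) ^ k • 1 := by
    intro i
    have hp := list_prod_pow_of_pairwise k _ (hrow i)
    rw [List.map_ofFn] at hp
    have : (List.ofFn ((· ^ k) ∘ fun j => A j ^ (M i j).val))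
        = (List.ofFn fun j => (A j ^ (M i j).val) ^ k) := rfl
    rw [this] at hp
    rw [hp, h3 i, smul_pow, one_pow]
  -- the relations hold
  have hrels : ∀ r ∈ lcsRels d M b, FreeGroup.lift u r = 1 := by
    intro r hr
    rcases hr with ⟨x, rfl⟩ | ⟨i, rfl⟩ | ⟨j, j', hjk, rfl⟩ | ⟨i, rfl⟩
    · rw [map_pow, FreeGroup.lift_apply_of]
      apply Units.ext
      show (B x ^ k) ^ d = 1
      rw [← pow_mul, mul_comm, pow_mul, hBd, one_pow]
    · simp only [map_mul, map_inv, FreeGroup.lift_apply_of]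
      exact commutator_eq_one (hcomm0 (u (some i)))
    · simp only [map_mul, map_inv, FreeGroup.lift_apply_of]
      exact commutator_eq_one (hcommA j j' (h2 j j' hjk))
    · rw [map_mul, map_inv, map_pow, FreeGroup.lift_apply_of, map_list_prod, List.map_ofFn]
      have hentry : (List.ofFn (⇑(FreeGroup.lift u) ∘ fun j => FreeGroup.of (some j) ^ (M i j).val))
          = (List.ofFn fun j => u (some j) ^ (M i j).val) := by
        congr 1
        funext j
        show FreeGroup.lift u (FreeGroup.of (some j) ^ (M i j).val) = _
        rw [map_pow, FreeGroup.lift_apply_of]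
      rw [hentry, inv_mul_eq_one]
      apply Units.ext
      rw [Units.val_pow_eq_pow_val]
      have hlhs : ((u (none : Option (Fin n)) : (H →L[ℂ] H)) ^ (b i).val)
          = (rootOfUnity d ^ k • 1) ^ (b i).val := by
        congr 1
        show (rootOfUnity d • (1 : H →L[ℂ] H)) ^ k = _
        rw [smul_pow, one_pow]
      rw [hlhs]
      have hval : ((List.ofFn fun j => u (some j) ^ (M i j).val).prod : H →L[ℂ] H)
          = (List.ofFn fun j => (A j ^ (M i j).val) ^ k).prod := by
        rw [← Units.coeHom_apply, map_list_prod, List.map_ofFn]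
        have hfun : (⇑(Units.coeHom (H →L[ℂ] H)) ∘ fun j => u (some j) ^ (M i j).val)
            = fun j => (A j ^ (M i j).val) ^ k := by
          funext j
          show ((u (some j) ^ (M i j).val : (H →L[ℂ] H)ˣ) : H →L[ℂ] H) = _
          rw [Units.val_pow_eq_pow_val]
          show (A j ^ k) ^ (M i j).val = _
          rw [pow_right_comm]
        rw [hfun]
      rw [hval, hrowk i, smul_pow, one_pow, pow_right_comm]
  refine ⟨PresentedGroup.toGroup hrels, fun i => ?_, ?_⟩
  · rw [PresentedGroup.toGroup.of]
  · rw [PresentedGroup.toGroup.of]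
    show (rootOfUnity d • (1 : H →L[ℂ] H)) ^ k = _
    rw [smul_pow, one_pow]

private lemma dvd_of_rootOfUnity_pow_eq_one {d t : ℕ} (hd : d ≠ 0)
    (h : rootOfUnity d ^ t = 1) : d ∣ t := by
  have hd' : (d : ℂ) ≠ 0 := Nat.cast_ne_zero.mpr hd
  have h2 : (2 * (Real.pi : ℂ) * Complex.I) ≠ 0 := by
    simp [Real.pi_ne_zero, Complex.I_ne_zero, Complex.ofReal_ne_zero]
  rw [rootOfUnity, ← Complex.exp_nat_mul, Complex.exp_eq_one_iff] at h
  obtain ⟨k, hk⟩ := h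
  have hteq : (t : ℂ) = (k * d : ℤ) := by
    field_simp at hk
    push_cast
    linear_combination hk
  have : (t : ℤ) = k * d := by exact_mod_cast hteq
  exact Int.natCast_dvd_natCast.mp ⟨k, by rw [this]; ring⟩

private lemma central_sq_eq_one {G : Type*} [Group G] (X Y W : G)
    (hX : W * X = X * W) (hY : W * Y = Y * W)
    (e1 : X * Y = W * (Y * X)) (e2 : X * X * (Y * Y) = W * W * (Y * Y * (X * X))) :
    W * W = 1 := by
  have h1 : X * Y * X⁻¹ = W * Y := by rw [e1]; group
  have h2 : X * (Y * Y) * X⁻¹ = W * W * (Y * Y) := by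
    have hs : X * (Y * Y) * X⁻¹ = (X * Y * X⁻¹) * (X * Y * X⁻¹) := by group
    rw [hs, h1]
    calc (W * Y) * (W * Y) = W * (Y * W) * Y := by group
      _ = W * (W * Y) * Y := by rw [← hY]
      _ = W * W * (Y * Y) := by group
  have hX2 : W * W * X = X * (W * W) := by
    calc W * W * X = W * (W * X) := by group
      _ = W * (X * W) := by rw [hX]
      _ = (W * X) * W := by group
      _ = (X * W) * W := by rw [hX]
      _ = X * (W * W) := by group
  have h3 : X * X * (Y * Y) * (X * X)⁻¹ = W * W * (W * W) * (Y * Y) := by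
    have hs : X * X * (Y * Y) * (X * X)⁻¹ = X * (X * (Y * Y) * X⁻¹) * X⁻¹ := by group
    rw [hs, h2]
    calc X * (W * W * (Y * Y)) * X⁻¹ = (X * (W * W)) * (Y * Y) * X⁻¹ := by group
      _ = (W * W * X) * (Y * Y) * X⁻¹ := by rw [hX2]
      _ = W * W * (X * (Y * Y) * X⁻¹) := by group
      _ = W * W * (W * W * (Y * Y)) := by rw [h2]
      _ = W * W * (W * W) * (Y * Y) := by group
  have h4 : X * X * (Y * Y) * (X * X)⁻¹ = W * W * (Y * Y) := by rw [e2]; group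
  have h5 : W * W * (W * W) * (Y * Y) = W * W * (Y * Y) := by rw [← h3, h4]
  have h6 : W * W * (W * W) = W * W := mul_right_cancel h5
  have h7 : W * W * (W * W) = W * W * 1 := by rw [mul_one]; exact h6
  exact mul_left_cancel h7

/-- for `d` odd, if the solution group of the LCS `(M,b)` over `ℤ_d` has a
phase-commutation relation `g^a h^{b'} = J^c h^{b'} g^a` with `c ≠ 0`, then `(M,b)` has
no quantum solution on any nonzero complex Hilbert space. -/
theorem no_quantum_solution_of_phase_commutation (d : ℕ) (hd : Odd d) {m n : ℕ}
    (M : Matrix (Fin m) (Fin n) (ZMod d)) (b : Fin m → ZMod d)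
    (i₁ i₂ : Fin n) (a b' c : ZMod d) (hc : c ≠ 0)
    (hrel : (PresentedGroup.of (some i₁) : SolutionGroup d M b) ^ a.val *
          PresentedGroup.of (some i₂) ^ b'.val
        = PresentedGroup.of (none : Option (Fin n)) ^ c.val *
          (PresentedGroup.of (some i₂) ^ b'.val *
            PresentedGroup.of (some i₁) ^ a.val)) :
    ¬ HasQuantumSolution d M b := by
  rintro ⟨H, _, _, _, _, A, hA⟩
  have hd0 : d ≠ 0 := by rintro rfl; simp [Nat.odd_iff] at hd
  haveI : NeZero d := ⟨hd0⟩
  obtain ⟨φ₁, hφ₁s, hφ₁n⟩ := exists_hom d hd0 M b A hA 1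
  obtain ⟨φ₂, hφ₂s, hφ₂n⟩ := exists_hom d hd0 M b A hA 2
  set X := φ₁ (PresentedGroup.of (some i₁)) with hX
  set Y := φ₁ (PresentedGroup.of (some i₂)) with hY
  set Wn := φ₁ (PresentedGroup.of (none : Option (Fin n))) with hWn
  -- φ₂ agrees with φ₁ squared on generators
  have h21 : φ₂ (PresentedGroup.of (some i₁)) = X * X := by
    apply Units.ext
    rw [Units.val_mul, hφ₂s, hφ₁s, pow_one, sq]
  have h22 : φ₂ (PresentedGroup.of (some i₂)) = Y * Y := by
    apply Units.ext
    rw [Units.val_mul, hφ₂s, hφ₁s, pow_one, sq]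
  have h2n : φ₂ (PresentedGroup.of (none : Option (Fin n))) = Wn * Wn := by
    apply Units.ext
    rw [Units.val_mul, hφ₂n, hφ₁n, pow_one]
    rw [smul_mul_assoc, one_mul, smul_smul, sq]
  -- centrality of Wn
  have hcen : ∀ z : (H →L[ℂ] H)ˣ, Commute Wn z := by
    intro z
    apply Units.ext
    show (Wn : H →L[ℂ] H) * z = (z : H →L[ℂ] H) * Wn
    rw [hφ₁n, pow_one]
    exact smul_one_comm _ _
  set Xa := X ^ a.val with hXa
  set Yb := Y ^ b'.val with hYb
  set W := Wn ^ c.val with hW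
  have e1 : Xa * Yb = W * (Yb * Xa) := by
    have := congrArg φ₁ hrel
    simpa only [map_mul, map_pow] using this
  have e2 : Xa * Xa * (Yb * Yb) = W * W * (Yb * Yb * (Xa * Xa)) := by
    have h := congrArg φ₂ hrel
    simp only [map_mul, map_pow, h21, h22, h2n] at h
    rw [(Commute.refl X).mul_pow, (Commute.refl Y).mul_pow, (Commute.refl Wn).mul_pow] at h
    exact h
  have hsq : W * W = 1 :=
    central_sq_eq_one Xa Yb W ((hcen _).pow_left c.val).eq ((hcen _).pow_left c.val).eq e1 e2
  -- extract the scalar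
  have hval : rootOfUnity d ^ (2 * c.val) • (1 : H →L[ℂ] H) = 1 := by
    have := congrArg (Units.val) hsq
    rw [Units.val_mul, Units.val_pow_eq_pow_val, hφ₁n, pow_one, smul_pow, one_pow,
      smul_mul_assoc, one_mul, smul_smul, ← pow_add] at this
    rw [two_mul]
    exact this
  have hone : (1 : H →L[ℂ] H) ≠ 0 := by
    obtain ⟨x, hx⟩ := exists_ne (0 : H)
    intro h
    exact hx (by simpa using congrArg (fun T => T x) h)
  have hsc : rootOfUnity d ^ (2 * c.val) = 1 := by
    have h0 : (rootOfUnity d ^ (2 * c.val) - 1) • (1 : H →L[ℂ] H) = 0 := by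
      rw [sub_smul, one_smul, hval, sub_self]
    rcases smul_eq_zero.mp h0 with h | h
    · exact sub_eq_zero.mp h
    · exact absurd h hone
  have hdvd : d ∣ 2 * c.val := dvd_of_rootOfUnity_pow_eq_one hd0 hsc
  have hcop : Nat.Coprime d 2 := Nat.coprime_two_right.mpr hd
  have hdcv : d ∣ c.val := (Nat.Coprime.dvd_of_dvd_mul_left hcop) hdvd
  have hlt : c.val < d := ZMod.val_lt c
  have hzero : c.val = 0 := Nat.eq_zero_of_dvd_of_lt hdcv hlt
  exact hc ((ZMod.val_eq_zero c).mp hzero)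
end

section
/- Let d be odd and let (M,b) be a linear constraint system over ℤ_d. Suppose there are generators g_{i_1}, …, g_{i_k} of the solution group 𝒢(M,b) and exponents a_1, …, a_k, c ∈ ℤ_d with c ≠ 0 such that g_{i_1}^{a_1} g_{i_2}^{a_2} ⋯ g_{i_k}^{a_k} = J^c g_{i_k}^{a_k} ⋯ g_{i_2}^{a_2} g_{i_1}^{a_1} holds in 𝒢(M,b). Then J^{2c} = e in 𝒢(M,b), and (M,b) has no quantum solution on any nonzero complex Hilbert space. -/
open MulOpposite

lemma listOfFn_rev' {α : Type*} {k : ℕ} (f : Fin k → α) :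
    (List.ofFn fun t : Fin k => f t.rev) = (List.ofFn f).reverse := by
  apply List.ext_getElem
  · simp
  · intro i h1 h2
    simp only [List.getElem_ofFn, List.getElem_reverse, List.length_ofFn]
    congr 1
    ext
    simp [Fin.rev]
    omega

lemma presented_rel_one {α : Type*} {rels : Set (FreeGroup α)} {r : FreeGroup α} (h : r ∈ rels) :
    PresentedGroup.mk rels r = 1 :=
  (QuotientGroup.eq_one_iff r).mpr (Subgroup.subset_normalClosure h)

lemma prod_reverse_of_pairwise_commute {G : Type*} [Monoid G] (l : List G)
    (h : l.Pairwise Commute) : l.reverse.prod = l.prod := by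
  have : l.reverse.Pairwise Commute := (List.pairwise_reverse).mpr (h.imp fun hc => hc.symm)
  exact (List.reverse_perm l).prod_eq' this

lemma map_prod_op {G : Type*} [Monoid G] {φ : G →* Gᵐᵒᵖ} (l : List G)
    (h : ∀ x ∈ l, φ x = MulOpposite.op x) : φ l.prod = MulOpposite.op (l.reverse.prod) := by
  rw [map_list_prod, List.map_congr_left h, MulOpposite.op_list_prod, List.map_reverse,
    List.reverse_reverse]



/-- for `d` odd, if the solution group of `(M,b)` over `ℤ_d` satisfies a
generalized phase-commutation relation
`g_{i₁}^{a₁} ⋯ g_{i_k}^{a_k} = J^c g_{i_k}^{a_k} ⋯ g_{i₁}^{a₁}` with `c ≠ 0`, then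
`J^{2c} = e` in `𝒢(M,b)` and `(M,b)` has no quantum solution on any nonzero complex
Hilbert space. -/
theorem no_quantum_solution_of_generalized_phase_commutation (d : ℕ) (hd : Odd d)
    {m n : ℕ} (M : Matrix (Fin m) (Fin n) (ZMod d)) (b : Fin m → ZMod d)
    (k : ℕ) (idx : Fin k → Fin n) (a : Fin k → ZMod d) (c : ZMod d) (hc : c ≠ 0)
    (hrel : (List.ofFn fun t =>
          (PresentedGroup.of (some (idx t)) : SolutionGroup d M b) ^ (a t).val).prod
        = PresentedGroup.of (none : Option (Fin n)) ^ c.val *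
          (List.ofFn fun t =>
            (PresentedGroup.of (some (idx t.rev)) : SolutionGroup d M b)
              ^ (a t.rev).val).prod) :
    (PresentedGroup.of (none : Option (Fin n)) : SolutionGroup d M b) ^ (2 * c).val = 1 ∧
      ¬ HasQuantumSolution d M b := by
  have hd0 : d ≠ 0 := by rintro rfl; simp [Nat.odd_iff] at hd
  haveI : NeZero d := ⟨hd0⟩
  set J : SolutionGroup d M b := PresentedGroup.of none with hJdef
  set g : Fin n → SolutionGroup d M b := fun i => PresentedGroup.of (some i) with hgdef
  have hrel_one : ∀ r ∈ lcsRels d M b, PresentedGroup.mk (lcsRels d M b) r = 1 :=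
    fun _ h => presented_rel_one h
  have hpow : ∀ x : Option (Fin n), (PresentedGroup.of x : SolutionGroup d M b) ^ d = 1 := by
    intro x
    have := hrel_one _ (Or.inl ⟨x, rfl⟩)
    rwa [map_pow] at this
  have hJg : ∀ i, Commute J (g i) := by
    intro i
    have h := hrel_one _ (Or.inr (Or.inl ⟨i, rfl⟩))
    simp only [map_mul, map_inv] at h
    exact commutatorElement_eq_one_iff_commute.mp h
  have hgg : ∀ j k' : Fin n, (∃ i, M i j ≠ 0 ∧ M i k' ≠ 0) → Commute (g j) (g k') := by
    intro j k' hjk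
    have h := hrel_one _ (Or.inr (Or.inr (Or.inl ⟨j, k', hjk, rfl⟩)))
    simp only [map_mul, map_inv] at h
    exact commutatorElement_eq_one_iff_commute.mp h
  have hrow : ∀ i : Fin m, (List.ofFn fun j => g j ^ (M i j).val).prod = J ^ (b i).val := by
    intro i
    have h := hrel_one _ (Or.inr (Or.inr (Or.inr ⟨i, rfl⟩)))
    rw [map_mul, map_inv, map_pow, inv_mul_eq_one, map_list_prod] at h
    simp only [List.map_ofFn, Function.comp_def, map_pow] at h
    exact h.symm
  -- pairwise commutation within each row
  have hpairwise : ∀ i : Fin m, (List.ofFn fun j => g j ^ (M i j).val).Pairwise Commute := by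
    intro i
    rw [List.pairwise_ofFn]
    intro j j' _
    by_cases h1 : M i j = 0
    · simp [h1]
    by_cases h2 : M i j' = 0
    · simp [h2]
    exact (hgg j j' ⟨i, h1, h2⟩).pow_pow _ _
  -- the anti-automorphism (as a homomorphism to the opposite group)
  have hlift : ∀ r ∈ lcsRels d M b,
      FreeGroup.lift (fun x => op (PresentedGroup.of x : SolutionGroup d M b)) r = 1 := by
    rintro r (⟨x, rfl⟩ | ⟨i, rfl⟩ | ⟨j, k', hjk, rfl⟩ | ⟨i, rfl⟩)
    · rw [map_pow, FreeGroup.lift_apply_of, ← op_pow, hpow, op_one]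
    · simp only [map_mul, map_inv, FreeGroup.lift_apply_of]
      exact commutatorElement_eq_one_iff_commute.mpr (hJg i).op
    · simp only [map_mul, map_inv, FreeGroup.lift_apply_of]
      exact commutatorElement_eq_one_iff_commute.mpr (hgg j k' hjk).op
    · rw [map_mul, map_inv, map_pow, FreeGroup.lift_apply_of, inv_mul_eq_one, map_list_prod]
      simp only [List.map_ofFn, Function.comp_def, map_pow, FreeGroup.lift_apply_of]
      symm
      calc (List.ofFn fun j => op (g j) ^ (M i j).val).prod
          = ((List.ofFn fun j => g j ^ (M i j).val).map op).prod := by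
            simp [List.map_ofFn, Function.comp_def, op_pow]
        _ = op ((List.ofFn fun j => g j ^ (M i j).val).reverse.prod) := by
            rw [op_list_prod, List.map_reverse, List.reverse_reverse]
        _ = op ((List.ofFn fun j => g j ^ (M i j).val).prod) := by
            rw [prod_reverse_of_pairwise_commute _ (hpairwise i)]
        _ = op (J ^ (b i).val) := by rw [hrow i]
        _ = op J ^ (b i).val := (op_pow _ _).symm
  set φ : SolutionGroup d M b →* (SolutionGroup d M b)ᵐᵒᵖ := PresentedGroup.toGroup hlift with hφdef
  have hφof : ∀ x, φ (PresentedGroup.of x) = op (PresentedGroup.of x) :=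
    fun x => PresentedGroup.toGroup.of hlift
  -- apply φ to the hypothesis
  set W : List (SolutionGroup d M b) := List.ofFn fun t => g (idx t) ^ (a t).val with hWdef
  have hWr : (List.ofFn fun t => g (idx t.rev) ^ (a t.rev).val) = W.reverse :=
    listOfFn_rev' (fun t => g (idx t) ^ (a t).val)
  have hmem : ∀ x ∈ W, φ x = op x := by
    intro x hx
    rw [hWdef, List.mem_ofFn] at hx
    obtain ⟨t, rfl⟩ := hx
    rw [map_pow, hφof, op_pow]
  have hφW : φ W.prod = op (W.reverse.prod) := map_prod_op W hmem
  have hφWrev : φ (W.reverse.prod) = op (W.prod) := by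
    have := map_prod_op W.reverse (fun x hx => hmem x (List.mem_reverse.mp hx))
    rwa [List.reverse_reverse] at this
  rw [hWr] at hrel
  have h1 := congrArg φ hrel
  rw [map_mul, map_pow, hφof, hφW, hφWrev, ← op_pow, ← op_mul, op_inj] at h1
  rw [h1] at hrel
  have hJW : Commute (J ^ c.val) W.prod := by
    apply Commute.pow_left
    apply Commute.list_prod_right
    intro x hx
    rw [hWdef, List.mem_ofFn] at hx
    obtain ⟨t, rfl⟩ := hx
    exact (hJg (idx t)).pow_right _
  rw [← mul_assoc, hJW.eq, mul_assoc, left_eq_mul, ← pow_add] at hrel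
  have h2 : J ^ (2 * c.val) = 1 := by rw [two_mul]; exact hrel
  have hdvd : orderOf J ∣ d := orderOf_dvd_of_pow_eq_one (hpow none)
  have hmod : (2 * c).val ≡ 2 * c.val [MOD d] := by
    have hcast : (((2 * c).val : ℕ) : ZMod d) = ((2 * c.val : ℕ) : ZMod d) := by
      push_cast
      simp [ZMod.natCast_val, ZMod.cast_id]
    exact (ZMod.natCast_eq_natCast_iff _ _ _).mp hcast
  have hfirst : J ^ (2 * c).val = 1 := by
    rw [pow_eq_pow_iff_modEq.mpr (hmod.of_dvd hdvd)]
    exact h2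
  refine ⟨hfirst, ?_⟩
  rintro ⟨H, _, _, _, _, A, hA1, hA2, hA3⟩
  have hdpos : 0 < d := Nat.pos_of_ne_zero hd0
  have hωne : rootOfUnity d ≠ 0 := Complex.exp_ne_zero _
  have hprim : IsPrimitiveRoot (rootOfUnity d) d := Complex.isPrimitiveRoot_exp d hd0
  have hAl : ∀ i, A i * A i ^ (d - 1) = 1 := by
    intro i; rw [← pow_succ', Nat.sub_add_cancel hdpos]; exact hA1 i
  have hAr : ∀ i, A i ^ (d - 1) * A i = 1 := by
    intro i; rw [← pow_succ, Nat.sub_add_cancel hdpos]; exact hA1 i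
  set u : Fin n → (H →L[ℂ] H)ˣ := fun i => ⟨A i, A i ^ (d - 1), hAl i, hAr i⟩ with hu
  have hwval : (rootOfUnity d • (1 : H →L[ℂ] H)) * ((rootOfUnity d)⁻¹ • 1) = 1 := by
    rw [smul_mul_smul_comm, mul_inv_cancel₀ hωne, one_mul, one_smul]
  have hwval' : ((rootOfUnity d)⁻¹ • (1 : H →L[ℂ] H)) * (rootOfUnity d • 1) = 1 := by
    rw [smul_mul_smul_comm, inv_mul_cancel₀ hωne, one_mul, one_smul]
  set w : (H →L[ℂ] H)ˣ := ⟨rootOfUnity d • 1, (rootOfUnity d)⁻¹ • 1, hwval, hwval'⟩ with hw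
  set f : Option (Fin n) → (H →L[ℂ] H)ˣ := fun x => Option.elim x w u with hf
  have hcoe : ∀ (l : List (H →L[ℂ] H)ˣ), (l.prod : H →L[ℂ] H) = (l.map Units.val).prod :=
    fun l => map_list_prod (Units.coeHom _) l
  have hwu : ∀ i : Fin n, Commute w (u i) := by
    intro i
    have : w * u i = u i * w := by
      apply Units.ext
      rw [Units.val_mul, Units.val_mul]
      show (rootOfUnity d • 1) * A i = A i * (rootOfUnity d • 1)
      rw [smul_mul_assoc, one_mul, mul_smul_comm, mul_one]
    exact this
  have hlift2 : ∀ r ∈ lcsRels d M b, FreeGroup.lift f r = 1 := by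
    rintro r (⟨x, rfl⟩ | ⟨i, rfl⟩ | ⟨j, k', hjk, rfl⟩ | ⟨i, rfl⟩)
    · rw [map_pow, FreeGroup.lift_apply_of]
      apply Units.ext
      rw [Units.val_pow_eq_pow_val, Units.val_one]
      match x with
      | none =>
        show (rootOfUnity d • (1 : H →L[ℂ] H)) ^ d = 1
        rw [smul_pow, one_pow, hprim.pow_eq_one, one_smul]
      | some i =>
        exact hA1 i
    · simp only [map_mul, map_inv, FreeGroup.lift_apply_of]
      exact commutatorElement_eq_one_iff_commute.mpr (hwu i)
    · simp only [map_mul, map_inv, FreeGroup.lift_apply_of]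
      refine commutatorElement_eq_one_iff_commute.mpr ?_
      have : u j * u k' = u k' * u j := by
        apply Units.ext
        rw [Units.val_mul, Units.val_mul]
        exact (hA2 j k' hjk).eq
      exact this
    · rw [map_mul, map_inv, map_pow, FreeGroup.lift_apply_of, inv_mul_eq_one, map_list_prod]
      simp only [List.map_ofFn, Function.comp_def, map_pow, FreeGroup.lift_apply_of]
      apply Units.ext
      rw [Units.val_pow_eq_pow_val, hcoe]
      simp only [List.map_ofFn, Function.comp_def, Units.val_pow_eq_pow_val]
      show (rootOfUnity d • (1 : H →L[ℂ] H)) ^ (b i).val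
          = (List.ofFn fun j => A j ^ (M i j).val).prod
      rw [hA3 i, smul_pow, one_pow]
  set ρ : SolutionGroup d M b →* (H →L[ℂ] H)ˣ := PresentedGroup.toGroup hlift2 with hρ
  have happ := congrArg ρ hfirst
  rw [map_pow, map_one, PresentedGroup.toGroup.of] at happ
  have hval := congrArg Units.val happ
  rw [Units.val_pow_eq_pow_val, Units.val_one] at hval
  have hval2 : rootOfUnity d ^ (2 * c).val • (1 : H →L[ℂ] H) = 1 := by
    have h' : (rootOfUnity d • (1 : H →L[ℂ] H)) ^ (2 * c).val = 1 := hval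
    rwa [smul_pow, one_pow] at h'
  obtain ⟨x, hx⟩ := exists_ne (0 : H)
  have hxeq : rootOfUnity d ^ (2 * c).val • x = x := by
    have := congrArg (fun T : H →L[ℂ] H => T x) hval2
    simpa using this
  have hsub : (rootOfUnity d ^ (2 * c).val - 1) • x = 0 := by
    rw [sub_smul, one_smul, hxeq, sub_self]
  have hω1 : rootOfUnity d ^ (2 * c).val = 1 := by
    rcases smul_eq_zero.mp hsub with h | h
    · exact sub_eq_zero.mp h
    · exact absurd h hx
  have hdvd2 : d ∣ (2 * c).val := (hprim.pow_eq_one_iff_dvd _).mp hω1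
  have hlt : (2 * c).val < d := ZMod.val_lt _
  have hene : (2 * c).val ≠ 0 := by
    intro h0
    apply hc
    have h2c : (2 : ZMod d) * c = 0 := (ZMod.val_eq_zero _).mp h0
    have hunit : IsUnit (2 : ZMod d) := by
      have := (ZMod.isUnit_iff_coprime 2 d).mpr (Nat.coprime_two_left.mpr hd)
      simpa using this
    exact (hunit.mul_right_eq_zero).mp h2c
  exact absurd (Nat.le_of_dvd (Nat.pos_of_ne_zero hene) hdvd2) (not_le.mpr hlt)
end

section
/- Let (M,b) be a linear constraint system over ℤ_d (d arbitrary) and suppose that for generators g, h of the solution group 𝒢(M,b) and a, b', c ∈ ℤ_d the relation g^a h^{b'} = J^c h^{b'} g^a holds in 𝒢(M,b). Then the reflected relation h^{b'} g^a = J^c g^a h^{b'} also holds in 𝒢(M,b), and consequently J^{2c} = e in 𝒢(M,b). -/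
open MulOpposite in
private lemma op_prod_reverse' {G : Type*} [Group G] (l : List G) :
    (l.map op).prod = op l.reverse.prod := by
  rw [op_list_prod, List.map_reverse, List.reverse_reverse]

/-- for any `d`, a phase-commutation relation `g^a h^{b'} = J^c h^{b'} g^a`
in the solution group of an LCS `(M,b)` over `ℤ_d` implies the reflected relation
`h^{b'} g^a = J^c g^a h^{b'}`, and consequently `J^{2c} = e` in `𝒢(M,b)`. -/
theorem reflected_phase_commutation (d : ℕ) (hd : 0 < d) {m n : ℕ}
    (M : Matrix (Fin m) (Fin n) (ZMod d)) (b : Fin m → ZMod d)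
    (i₁ i₂ : Fin n) (a b' c : ZMod d)
    (hrel : (PresentedGroup.of (some i₁) : SolutionGroup d M b) ^ a.val *
          PresentedGroup.of (some i₂) ^ b'.val
        = PresentedGroup.of (none : Option (Fin n)) ^ c.val *
          (PresentedGroup.of (some i₂) ^ b'.val *
            PresentedGroup.of (some i₁) ^ a.val)) :
    ((PresentedGroup.of (some i₂) : SolutionGroup d M b) ^ b'.val *
          PresentedGroup.of (some i₁) ^ a.val
        = PresentedGroup.of (none : Option (Fin n)) ^ c.val *
          (PresentedGroup.of (some i₁) ^ a.val *
            PresentedGroup.of (some i₂) ^ b'.val)) ∧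
      (PresentedGroup.of (none : Option (Fin n)) : SolutionGroup d M b) ^ (2 * c).val = 1 := by
  classical
  haveI : NeZero d := ⟨hd.ne'⟩
  set G := SolutionGroup d M b with hG
  set rels := lcsRels d M b with hrels
  have hone : ∀ r ∈ rels, PresentedGroup.mk rels r = 1 := fun r hr =>
    (QuotientGroup.eq_one_iff r).mpr (Subgroup.subset_normalClosure hr)
  have hpow : ∀ x : Option (Fin n), (PresentedGroup.of x : G) ^ d = 1 := by
    intro x
    have h := hone _ (show _ ∈ lcsRels d M b from Or.inl ⟨x, rfl⟩)
    rwa [map_pow] at h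
  have hJc : ∀ i : Fin n, Commute (PresentedGroup.of (none : Option (Fin n)) : G)
      (PresentedGroup.of (some i)) := by
    intro i
    have h := hone _ (show _ ∈ lcsRels d M b from Or.inr (Or.inl ⟨i, rfl⟩))
    simp only [map_mul, map_inv] at h
    exact commutatorElement_eq_one_iff_commute.mp h
  have hgc : ∀ j k : Fin n, (∃ i, M i j ≠ 0 ∧ M i k ≠ 0) →
      Commute (PresentedGroup.of (some j) : G) (PresentedGroup.of (some k)) := by
    intro j k hjk
    have h := hone _ (show _ ∈ lcsRels d M b from Or.inr (Or.inr (Or.inl ⟨j, k, hjk, rfl⟩)))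
    simp only [map_mul, map_inv] at h
    exact commutatorElement_eq_one_iff_commute.mp h
  have hrow : ∀ i : Fin m,
      (List.ofFn fun j => (PresentedGroup.of (some j) : G) ^ (M i j).val).prod
        = PresentedGroup.of (none : Option (Fin n)) ^ (b i).val := by
    intro i
    have h := hone _ (show _ ∈ lcsRels d M b from Or.inr (Or.inr (Or.inr ⟨i, rfl⟩)))
    rw [map_mul, map_inv, map_pow, map_list_prod, List.map_ofFn, inv_mul_eq_one] at h
    simp only [Function.comp_def, map_pow] at h
    exact h.symm
  have hpair : ∀ i : Fin m, (List.ofFn fun j =>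
      (PresentedGroup.of (some j) : G) ^ (M i j).val).Pairwise Commute := by
    intro i
    rw [List.pairwise_ofFn]
    intro j k _
    by_cases hj : M i j = 0
    · simp [hj, ZMod.val_zero, Commute.one_left]
    by_cases hk : M i k = 0
    · simp [hk, ZMod.val_zero, Commute.one_right]
    exact (hgc j k ⟨i, hj, hk⟩).pow_pow _ _
  have hlift : ∀ r ∈ rels, FreeGroup.lift
      (fun x => MulOpposite.op (PresentedGroup.of x : G)) r = 1 := by
    intro r hr
    rcases (show r ∈ lcsRels d M b from hr) with ⟨x, rfl⟩ | ⟨i, rfl⟩ | ⟨j, k, hjk, rfl⟩ | ⟨i, rfl⟩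
    · rw [map_pow, FreeGroup.lift_apply_of, ← MulOpposite.op_pow, hpow, MulOpposite.op_one]
    · simp only [map_mul, map_inv, FreeGroup.lift_apply_of]
      exact commutatorElement_eq_one_iff_commute.mpr ((hJc i).op)
    · simp only [map_mul, map_inv, FreeGroup.lift_apply_of]
      exact commutatorElement_eq_one_iff_commute.mpr ((hgc j k hjk).op)
    · rw [map_mul, map_inv, map_pow, map_list_prod, List.map_ofFn, FreeGroup.lift_apply_of]
      have heq : (List.ofFn ((FreeGroup.lift fun x => MulOpposite.op (PresentedGroup.of x : G)) ∘
          fun j => FreeGroup.of (some j) ^ (M i j).val))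
          = (List.ofFn fun j => (PresentedGroup.of (some j) : G) ^ (M i j).val).map
              MulOpposite.op := by
        rw [List.map_ofFn]
        congr 1
        ext j
        simp [Function.comp, map_pow, MulOpposite.op_pow]
      rw [heq, op_prod_reverse',
        ((List.ofFn fun j => (PresentedGroup.of (some j) : G) ^ (M i j).val).reverse_perm).prod_eq'
          (List.pairwise_reverse.mpr ((hpair i).imp fun h => h.symm)), hrow i,
        ← MulOpposite.op_pow, ← MulOpposite.op_inv, ← MulOpposite.op_mul, mul_inv_cancel,
        MulOpposite.op_one]
  -- the anti-automorphism
  set F : G →* Gᵐᵒᵖ := PresentedGroup.toGroup hlift with hF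
  have hFof : ∀ x, F (PresentedGroup.of x) = MulOpposite.op (PresentedGroup.of x) :=
    fun x => PresentedGroup.toGroup.of hlift
  set J : G := PresentedGroup.of (none : Option (Fin n)) with hJ
  set A : G := PresentedGroup.of (some i₁) ^ a.val with hA
  set B : G := PresentedGroup.of (some i₂) ^ b'.val with hB
  have hcomA : Commute (J ^ c.val) A := (hJc i₁).pow_pow _ _
  have hcomB : Commute (J ^ c.val) B := (hJc i₂).pow_pow _ _
  have h2 : B * A = A * B * J ^ c.val := by
    have h2 := congrArg F hrel
    simp only [hA, hB, hJ, map_mul, map_pow, hFof, ← MulOpposite.op_pow,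
      ← MulOpposite.op_mul] at h2
    exact MulOpposite.op_injective h2
  have key : B * A = J ^ c.val * (A * B) := by
    rw [h2, (hcomA.mul_right hcomB).eq]
  refine ⟨key, ?_⟩
  have hsq : J ^ (c.val + c.val) = 1 := by
    have h3 : A * B = J ^ (c.val + c.val) * (A * B) := by
      calc A * B = J ^ c.val * (B * A) := hrel
        _ = J ^ c.val * (J ^ c.val * (A * B)) := by rw [key]
        _ = J ^ (c.val + c.val) * (A * B) := by rw [pow_add, mul_assoc]
    exact (right_eq_mul.mp h3)
  have hmod : ∀ k : ℕ, (J : G) ^ (k % d) = J ^ k := by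
    intro k
    conv_rhs => rw [← Nat.div_add_mod k d]
    rw [pow_add, pow_mul, hpow none, one_pow, one_mul]
  rw [two_mul, ZMod.val_add, hmod]
  exact hsq
end
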